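/- For every n×n real matrix M, E[‖M ε‖²] = σ²·tr(Mᵀ·M) and Var(‖M ε‖²) ≤ (2 + |κ|)·σ²·‖Mᵀ·M‖_op·E[‖M ε‖²], where ‖·‖_op denotes the operator (spectral) norm (second part of Lemma 5). -/

import Mathlib

open Matrix MeasureTheory ProbabilityTheory ContinuousLinearMap

private lemma amgm4 (a b c d : ℝ) : |a*b*c*d| ≤ a^4+b^4+c^4+d^4+1 := by
  have h1 : |a*b| ≤ (a^2+b^2)/2 := by
    rw [abs_le]; constructor <;> nlinarith [sq_nonneg (a-b), sq_nonneg (a+b)]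
  have h2 : |c*d| ≤ (c^2+d^2)/2 := by
    rw [abs_le]; constructor <;> nlinarith [sq_nonneg (c-d), sq_nonneg (c+d)]
  have h3 : |a*b*c*d| = |a*b| * |c*d| := by rw [← abs_mul]; ring_nf
  nlinarith [abs_nonneg (a*b), abs_nonneg (c*d), sq_nonneg (a^2+b^2-c^2-d^2), sq_nonneg (a^2-b^2), sq_nonneg (c^2-d^2), sq_nonneg (a^2+b^2), sq_nonneg (a^2+b^2+c^2+d^2)]

private lemma amgm1 (a : ℝ) : |a| ≤ a^4+4 := by
  have := amgm4 a 1 1 1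
  have h : |a| = |a*1*1*1| := by ring_nf
  rw [h]; nlinarith

private lemma amgm2 (a b : ℝ) : |a*b| ≤ a^4+b^4+3 := by
  have := amgm4 a b 1 1
  have h : |a*b| = |a*b*1*1| := by ring_nf
  rw [h]; nlinarith

private lemma amgm3 (a b c : ℝ) : |a*b*c| ≤ a^4+b^4+c^4+2 := by
  have := amgm4 a b c 1
  have h : |a*b*c| = |a*b*c*1| := by ring_nf
  rw [h]; nlinarith

section MomentLemmas

set_option linter.unusedSectionVars false

variable {Ω : Type*} [MeasurableSpace Ω] {μ : Measure Ω} [IsProbabilityMeasure μ]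
  {n : ℕ} {ε : Fin n → Ω → ℝ} {σ κ : ℝ}

private lemma int_quad (hmeas : ∀ i, Measurable (ε i))
    (hfour_int : ∀ i, Integrable (fun ω => (ε i ω) ^ 4) μ) (i j k l : Fin n) :
    Integrable (fun ω => ε i ω * ε j ω * ε k ω * ε l ω) μ := by
  refine Integrable.mono' (g := fun ω => (ε i ω)^4 + (ε j ω)^4 + (ε k ω)^4 + (ε l ω)^4 + 1)
    ?_ ?_ ?_
  · exact ((((hfour_int i).add (hfour_int j)).add (hfour_int k)).add (hfour_int l)).add
      (integrable_const 1)
  · exact (((((hmeas i).mul (hmeas j)).mul (hmeas k)).mul (hmeas l))).aestronglyMeasurable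
  · exact Filter.Eventually.of_forall fun ω => by
      rw [Real.norm_eq_abs]; exact amgm4 _ _ _ _

private lemma int_one (hmeas : ∀ i, Measurable (ε i))
    (hfour_int : ∀ i, Integrable (fun ω => (ε i ω) ^ 4) μ) (i : Fin n) :
    Integrable (ε i) μ := by
  refine Integrable.mono' (g := fun ω => (ε i ω)^4 + 4) ((hfour_int i).add (integrable_const 4))
    (hmeas i).aestronglyMeasurable (Filter.Eventually.of_forall fun ω => ?_)
  rw [Real.norm_eq_abs]; exact amgm1 _

private lemma int_pair (hmeas : ∀ i, Measurable (ε i))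
    (hfour_int : ∀ i, Integrable (fun ω => (ε i ω) ^ 4) μ) (i j : Fin n) :
    Integrable (fun ω => ε i ω * ε j ω) μ := by
  refine Integrable.mono' (g := fun ω => (ε i ω)^4 + (ε j ω)^4 + 3)
    (((hfour_int i).add (hfour_int j)).add (integrable_const 3))
    ((hmeas i).mul (hmeas j)).aestronglyMeasurable (Filter.Eventually.of_forall fun ω => ?_)
  rw [Real.norm_eq_abs]; exact amgm2 _ _

private lemma int_triple (hmeas : ∀ i, Measurable (ε i))
    (hfour_int : ∀ i, Integrable (fun ω => (ε i ω) ^ 4) μ) (i j k : Fin n) :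
    Integrable (fun ω => ε i ω * ε j ω * ε k ω) μ := by
  refine Integrable.mono' (g := fun ω => (ε i ω)^4 + (ε j ω)^4 + (ε k ω)^4 + 2)
    ((((hfour_int i).add (hfour_int j)).add (hfour_int k)).add (integrable_const 2))
    (((hmeas i).mul (hmeas j)).mul (hmeas k)).aestronglyMeasurable
    (Filter.Eventually.of_forall fun ω => ?_)
  rw [Real.norm_eq_abs]; exact amgm3 _ _ _

private lemma m11 (hmeas : ∀ i, Measurable (ε i))
    (hindep : iIndepFun ε μ)
    (hmean : ∀ i, ∫ ω, ε i ω ∂μ = 0)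
    (hfour_int : ∀ i, Integrable (fun ω => (ε i ω) ^ 4) μ)
    {i j : Fin n} (hij : i ≠ j) :
    ∫ ω, ε i ω * ε j ω ∂μ = 0 := by
  have h := (hindep.indepFun hij).integral_mul_eq_mul_integral
    (int_one hmeas hfour_int i).aestronglyMeasurable (int_one hmeas hfour_int j).aestronglyMeasurable
  calc ∫ ω, ε i ω * ε j ω ∂μ = ∫ ω, (ε i * ε j) ω ∂μ := rfl
  _ = (∫ ω, ε i ω ∂μ) * ∫ ω, ε j ω ∂μ := h
  _ = 0 := by rw [hmean i, hmean j]; ring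

private lemma L31 (hmeas : ∀ i, Measurable (ε i))
    (hindep : iIndepFun ε μ)
    (hmean : ∀ i, ∫ ω, ε i ω ∂μ = 0)
    (hfour_int : ∀ i, Integrable (fun ω => (ε i ω) ^ 4) μ)
    {i l : Fin n} (hil : i ≠ l) :
    ∫ ω, ε i ω * ε i ω * ε i ω * ε l ω ∂μ = 0 := by
  have hφ : Measurable (fun x : ℝ => x * x * x) := by fun_prop
  have hI : IndepFun (fun ω => ε i ω * ε i ω * ε i ω) (ε l) μ :=
    (hindep.indepFun hil).comp hφ measurable_id
  have h := hI.integral_mul_eq_mul_integral (int_triple hmeas hfour_int i i i).aestronglyMeasurable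
    (int_one hmeas hfour_int l).aestronglyMeasurable
  calc ∫ ω, ε i ω * ε i ω * ε i ω * ε l ω ∂μ
      = (∫ ω, ε i ω * ε i ω * ε i ω ∂μ) * ∫ ω, ε l ω ∂μ := h
  _ = 0 := by rw [hmean l]; ring

private lemma L22 (hmeas : ∀ i, Measurable (ε i))
    (hindep : iIndepFun ε μ)
    (hvar : ∀ i, ∫ ω, (ε i ω) ^ 2 ∂μ = σ ^ 2)
    (hfour_int : ∀ i, Integrable (fun ω => (ε i ω) ^ 4) μ)
    {i k : Fin n} (hik : i ≠ k) :
    ∫ ω, ε i ω * ε i ω * ε k ω * ε k ω ∂μ = σ^2 * σ^2 := by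
  have hφ : Measurable (fun x : ℝ => x * x) := by fun_prop
  have hI : IndepFun (fun ω => ε i ω * ε i ω) (fun ω => ε k ω * ε k ω) μ :=
    (hindep.indepFun hik).comp hφ hφ
  have h := hI.integral_mul_eq_mul_integral (int_pair hmeas hfour_int i i).aestronglyMeasurable
    (int_pair hmeas hfour_int k k).aestronglyMeasurable
  have hv : ∀ j : Fin n, ∫ ω, ε j ω * ε j ω ∂μ = σ^2 := fun j => by
    rw [show (fun ω => ε j ω * ε j ω) = fun ω => (ε j ω)^2 from funext fun ω => by ring]
    exact hvar j
  calc ∫ ω, ε i ω * ε i ω * ε k ω * ε k ω ∂μ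
      = ∫ ω, (ε i ω * ε i ω) * (ε k ω * ε k ω) ∂μ := by
        congr 1; funext ω; ring
  _ = (∫ ω, ε i ω * ε i ω ∂μ) * ∫ ω, ε k ω * ε k ω ∂μ := h
  _ = σ^2 * σ^2 := by rw [hv i, hv k]

private lemma L211 (hmeas : ∀ i, Measurable (ε i))
    (hindep : iIndepFun ε μ)
    (hmean : ∀ i, ∫ ω, ε i ω ∂μ = 0)
    (hfour_int : ∀ i, Integrable (fun ω => (ε i ω) ^ 4) μ)
    {i k l : Fin n} (hil : i ≠ l) (hkl : k ≠ l) :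
    ∫ ω, ε i ω * ε i ω * ε k ω * ε l ω ∂μ = 0 := by
  have hφ : Measurable (fun p : ℝ × ℝ => p.1 * p.1 * p.2) := by fun_prop
  have hI : IndepFun (fun ω => ε i ω * ε i ω * ε k ω) (ε l) μ :=
    (hindep.indepFun_prodMk hmeas i k l hil hkl).comp hφ measurable_id
  have h := hI.integral_mul_eq_mul_integral (int_triple hmeas hfour_int i i k).aestronglyMeasurable
    (int_one hmeas hfour_int l).aestronglyMeasurable
  calc ∫ ω, ε i ω * ε i ω * ε k ω * ε l ω ∂μ
      = (∫ ω, ε i ω * ε i ω * ε k ω ∂μ) * ∫ ω, ε l ω ∂μ := h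
  _ = 0 := by rw [hmean l]; ring

private lemma L1111 (hmeas : ∀ i, Measurable (ε i))
    (hindep : iIndepFun ε μ)
    (hmean : ∀ i, ∫ ω, ε i ω ∂μ = 0)
    (hindep2 : ∀ {a b : Fin n}, a ≠ b → (∫ ω, ε a ω * ε b ω ∂μ) = 0)
    (hfour_int : ∀ i, Integrable (fun ω => (ε i ω) ^ 4) μ)
    {i j k l : Fin n} (hij : i ≠ j) (hik : i ≠ k) (hil : i ≠ l)
    (hjk : j ≠ k) (hjl : j ≠ l) (hkl : k ≠ l) :
    ∫ ω, ε i ω * ε j ω * ε k ω * ε l ω ∂μ = 0 := by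
  have hI : IndepFun (ε i * ε j) (ε k * ε l) μ :=
    hindep.indepFun_mul_mul hmeas i j k l hik hil hjk hjl
  have h := hI.integral_mul_eq_mul_integral
    (int_pair hmeas hfour_int i j).aestronglyMeasurable (int_pair hmeas hfour_int k l).aestronglyMeasurable
  calc ∫ ω, ε i ω * ε j ω * ε k ω * ε l ω ∂μ
      = ∫ ω, (ε i ω * ε j ω) * (ε k ω * ε l ω) ∂μ := by congr 1; funext ω; ring
  _ = (∫ ω, ε i ω * ε j ω ∂μ) * ∫ ω, ε k ω * ε l ω ∂μ := h
  _ = 0 := by rw [hindep2 hij]; ring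

private lemma m_formula (hmeas : ∀ i, Measurable (ε i))
    (hindep : iIndepFun ε μ)
    (hmean : ∀ i, ∫ ω, ε i ω ∂μ = 0)
    (hvar : ∀ i, ∫ ω, (ε i ω) ^ 2 ∂μ = σ ^ 2)
    (hfour_int : ∀ i, Integrable (fun ω => (ε i ω) ^ 4) μ)
    (hfour : ∀ i, ∫ ω, (ε i ω) ^ 4 ∂μ = (3 + κ) * σ ^ 4)
    (hindep2 : ∀ {a b : Fin n}, a ≠ b → (∫ ω, ε a ω * ε b ω ∂μ) = 0)
    (i j k l : Fin n) :
    ∫ ω, ε i ω * ε j ω * ε k ω * ε l ω ∂μ =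
      σ^2*σ^2 * ((if i=j then (1:ℝ) else 0)*(if k=l then 1 else 0)
        + (if i=k then (1:ℝ) else 0)*(if j=l then 1 else 0)
        + (if i=l then (1:ℝ) else 0)*(if j=k then 1 else 0))
      + (if i=j then (1:ℝ) else 0)*(if j=k then 1 else 0)*(if k=l then 1 else 0)
          *(κ*σ^2*σ^2) := by
  by_cases hij : i = j
  · subst hij
    by_cases hik : i = k
    · subst hik
      by_cases hil : i = l
      · subst hil
        rw [show (fun ω => ε i ω * ε i ω * ε i ω * ε i ω) = fun ω => (ε i ω)^4 from
          funext fun ω => by ring]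
        rw [hfour i]; simp; ring
      · rw [L31 hmeas hindep hmean hfour_int hil]
        simp [hil, Ne.symm hil]
    · by_cases hil : i = l
      · subst hil
        rw [show (∫ ω, ε i ω * ε i ω * ε k ω * ε i ω ∂μ)
            = ∫ ω, ε i ω * ε i ω * ε i ω * ε k ω ∂μ from by congr 1; funext ω; ring]
        rw [L31 hmeas hindep hmean hfour_int hik]
        simp [hik, Ne.symm hik]
      · by_cases hkl : k = l
        · subst hkl
          rw [L22 hmeas hindep hvar hfour_int hik]
          simp [hik, hil, Ne.symm hik]
        · rw [L211 hmeas hindep hmean hfour_int hil hkl]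
          simp [hik, hil, hkl]
  · by_cases hkl : k = l
    · subst hkl
      by_cases hik : i = k
      · subst hik
        rw [show (∫ ω, ε i ω * ε j ω * ε i ω * ε i ω ∂μ)
            = ∫ ω, ε i ω * ε i ω * ε i ω * ε j ω ∂μ from by congr 1; funext ω; ring]
        rw [L31 hmeas hindep hmean hfour_int hij]
        simp [hij, Ne.symm hij]
      · by_cases hjk : j = k
        · subst hjk
          rw [show (∫ ω, ε i ω * ε j ω * ε j ω * ε j ω ∂μ)
              = ∫ ω, ε j ω * ε j ω * ε j ω * ε i ω ∂μ from by congr 1; funext ω; ring]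
          rw [L31 hmeas hindep hmean hfour_int (Ne.symm hij)]
          simp [hij, hik]
        · rw [show (∫ ω, ε i ω * ε j ω * ε k ω * ε k ω ∂μ)
              = ∫ ω, ε k ω * ε k ω * ε i ω * ε j ω ∂μ from by congr 1; funext ω; ring]
          rw [L211 hmeas hindep hmean hfour_int (Ne.symm hjk) hij]
          simp [hij, hik, hjk]
    · by_cases hik : i = k
      · subst hik
        by_cases hjl : j = l
        · subst hjl
          rw [show (∫ ω, ε i ω * ε j ω * ε i ω * ε j ω ∂μ)
              = ∫ ω, ε i ω * ε i ω * ε j ω * ε j ω ∂μ from by congr 1; funext ω; ring]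
          rw [L22 hmeas hindep hvar hfour_int hij]
          simp [hij, hkl, Ne.symm hij]
        · rw [show (∫ ω, ε i ω * ε j ω * ε i ω * ε l ω ∂μ)
              = ∫ ω, ε i ω * ε i ω * ε j ω * ε l ω ∂μ from by congr 1; funext ω; ring]
          rw [L211 hmeas hindep hmean hfour_int hkl hjl]
          simp [hij, hjl, hkl]
      · by_cases hil : i = l
        · subst hil
          by_cases hjk : j = k
          · subst hjk
            rw [show (∫ ω, ε i ω * ε j ω * ε j ω * ε i ω ∂μ)
                = ∫ ω, ε i ω * ε i ω * ε j ω * ε j ω ∂μ from by congr 1; funext ω; ring]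
            rw [L22 hmeas hindep hvar hfour_int hij]
            simp [hij, hik, hkl]
          · rw [show (∫ ω, ε i ω * ε j ω * ε k ω * ε i ω ∂μ)
                = ∫ ω, ε i ω * ε i ω * ε j ω * ε k ω ∂μ from by congr 1; funext ω; ring]
            rw [L211 hmeas hindep hmean hfour_int hik hjk]
            simp [hij, hik, hjk, hkl]
        · by_cases hjk : j = k
          · subst hjk
            rw [show (∫ ω, ε i ω * ε j ω * ε j ω * ε l ω ∂μ)
                = ∫ ω, ε j ω * ε j ω * ε i ω * ε l ω ∂μ from by congr 1; funext ω; ring]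
            rw [L211 hmeas hindep hmean hfour_int
              (fun h => hkl h) hil]
            simp [hij, hik, hil, hkl]
          · by_cases hjl : j = l
            · subst hjl
              rw [show (∫ ω, ε i ω * ε j ω * ε k ω * ε j ω ∂μ)
                  = ∫ ω, ε j ω * ε j ω * ε i ω * ε k ω ∂μ from by congr 1; funext ω; ring]
              rw [L211 hmeas hindep hmean hfour_int hjk hik]
              simp [hij, hik, hkl]
            · rw [L1111 hmeas hindep hmean hindep2 hfour_int hij hik hil hjk hjl hkl]
              simp [hij, hik, hil, hjk, hjl, hkl]

end MomentLemmas

private lemma quad_eq {n : ℕ} (M : Matrix (Fin n) (Fin n) ℝ) (v : Fin n → ℝ) :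
    M.mulVec v ⬝ᵥ M.mulVec v = ∑ p : Fin n × Fin n, (Mᵀ*M) p.1 p.2 * (v p.1 * v p.2) := by
  simp only [dotProduct, mulVec, Matrix.mul_apply, Matrix.transpose_apply,
    Fintype.sum_prod_type, Finset.sum_mul, Finset.mul_sum]
  rw [Finset.sum_comm]
  refine Finset.sum_congr rfl fun i _ => ?_
  rw [Finset.sum_comm]
  refine Finset.sum_congr rfl fun j _ => Finset.sum_congr rfl fun k _ => by ring

section SumLemmas
variable {n : ℕ}

private lemma sumS1 (A : Matrix (Fin n) (Fin n) ℝ) :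
    ∑ p : Fin n × Fin n, A p.1 p.2 * (if p.1 = p.2 then (1:ℝ) else 0) = A.trace := by
  simp [Fintype.sum_prod_type, mul_ite, Matrix.trace, Matrix.diag, Finset.sum_ite_eq]

private lemma sumS2 (A : Matrix (Fin n) (Fin n) ℝ) :
    ∑ p : Fin n × Fin n, ∑ q : Fin n × Fin n,
      A p.1 p.2 * A q.1 q.2 * ((if p.1 = q.1 then (1:ℝ) else 0) * (if p.2 = q.2 then 1 else 0))
      = ∑ p : Fin n × Fin n, A p.1 p.2 * A p.1 p.2 := by
  simp [Fintype.sum_prod_type, mul_ite, ite_mul, Finset.mul_sum, Finset.sum_ite_eq,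
    Finset.sum_ite_eq']

private lemma sumS3 (A : Matrix (Fin n) (Fin n) ℝ) :
    ∑ p : Fin n × Fin n, ∑ q : Fin n × Fin n,
      A p.1 p.2 * A q.1 q.2 * ((if p.1 = q.2 then (1:ℝ) else 0) * (if p.2 = q.1 then 1 else 0))
      = ∑ p : Fin n × Fin n, A p.1 p.2 * A p.2 p.1 := by
  simp [Fintype.sum_prod_type, mul_ite, ite_mul, Finset.mul_sum, Finset.sum_ite_eq,
    Finset.sum_ite_eq']

private lemma sumS4 (A : Matrix (Fin n) (Fin n) ℝ) :
    ∑ p : Fin n × Fin n, ∑ q : Fin n × Fin n,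
      A p.1 p.2 * A q.1 q.2 * ((if p.1 = p.2 then (1:ℝ) else 0) * (if p.2 = q.1 then 1 else 0)
        * (if q.1 = q.2 then 1 else 0))
      = ∑ i, A i i * A i i := by
  simp [Fintype.sum_prod_type, mul_ite, ite_mul, Finset.mul_sum, Finset.sum_ite_eq,
    Finset.sum_ite_eq']

private lemma sumS1' (A : Matrix (Fin n) (Fin n) ℝ) :
    ∑ p : Fin n × Fin n, ∑ q : Fin n × Fin n,
      A p.1 p.2 * A q.1 q.2 * ((if p.1 = p.2 then (1:ℝ) else 0) * (if q.1 = q.2 then 1 else 0))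
      = A.trace * A.trace := by
  have : ∀ p q : Fin n × Fin n, A p.1 p.2 * A q.1 q.2 *
      ((if p.1 = p.2 then (1:ℝ) else 0) * (if q.1 = q.2 then 1 else 0))
      = (A p.1 p.2 * (if p.1 = p.2 then (1:ℝ) else 0)) *
        (A q.1 q.2 * (if q.1 = q.2 then (1:ℝ) else 0)) := fun p q => by ring
  simp_rw [this]
  rw [← Finset.sum_mul_sum, sumS1]

end SumLemmas

section NormLemmas
variable {n : ℕ}

private lemma norm_sq_eq (y : EuclideanSpace ℝ (Fin n)) : ‖y‖^2 = ∑ i, (y i)^2 := by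
  rw [EuclideanSpace.norm_eq, Real.sq_sqrt (by positivity)]
  simp [Real.norm_eq_abs, sq_abs]

private lemma clm_apply (M : Matrix (Fin n) (Fin n) ℝ) (x : EuclideanSpace ℝ (Fin n))
    (i : Fin n) : (Matrix.toEuclideanCLM (𝕜 := ℝ) M x) i = M.mulVec x i := rfl

private lemma star_clm (M : Matrix (Fin n) (Fin n) ℝ) :
    Matrix.toEuclideanCLM (𝕜 := ℝ) Mᵀ = star (Matrix.toEuclideanCLM (𝕜 := ℝ) M) := by
  rw [← map_star]
  congr 1

private lemma col_eq (M : Matrix (Fin n) (Fin n) ℝ) (j : Fin n) :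
    ‖Matrix.toEuclideanCLM (𝕜 := ℝ) M (EuclideanSpace.single j 1)‖^2 = (Mᵀ*M) j j := by
  rw [norm_sq_eq]
  simp only [clm_apply]
  simp [Matrix.mulVec, Matrix.mul_apply, dotProduct, EuclideanSpace.single_apply,
    Finset.sum_ite_eq, mul_ite, Matrix.transpose_apply, sq]

private lemma diag_nonneg (M : Matrix (Fin n) (Fin n) ℝ) (j : Fin n) : 0 ≤ (Mᵀ*M) j j := by
  rw [← col_eq]; positivity

private lemma norm_A (M : Matrix (Fin n) (Fin n) ℝ) :
    ‖Matrix.toEuclideanCLM (𝕜 := ℝ) (Mᵀ * M)‖ = ‖Matrix.toEuclideanCLM (𝕜 := ℝ) M‖^2 := by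
  rw [_root_.map_mul, star_clm, star_eq_adjoint, mul_def, norm_adjoint_comp_self, sq]

private lemma diag_le_norm (M : Matrix (Fin n) (Fin n) ℝ) (j : Fin n) :
    (Mᵀ*M) j j ≤ ‖Matrix.toEuclideanCLM (𝕜 := ℝ) (Mᵀ*M)‖ := by
  rw [norm_A, ← col_eq]
  have h := (Matrix.toEuclideanCLM (𝕜 := ℝ) M).le_opNorm (EuclideanSpace.single j 1)
  have h1 : ‖(EuclideanSpace.single j (1:ℝ))‖ = 1 := by
    rw [EuclideanSpace.norm_single]; norm_num
  rw [h1, mul_one] at h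
  have := norm_nonneg (Matrix.toEuclideanCLM (𝕜 := ℝ) M (EuclideanSpace.single j 1))
  nlinarith

set_option synthInstance.maxHeartbeats 1000000 in
private lemma colsq_le (M : Matrix (Fin n) (Fin n) ℝ) (j : Fin n) :
    ∑ i, ((Mᵀ*M) i j)^2 ≤ ‖Matrix.toEuclideanCLM (𝕜 := ℝ) (Mᵀ*M)‖ * (Mᵀ*M) j j := by
  have key : ∑ i, ((Mᵀ*M) i j)^2
      = ‖Matrix.toEuclideanCLM (𝕜 := ℝ) (Mᵀ*M) (EuclideanSpace.single j 1)‖^2 := by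
    rw [norm_sq_eq]
    simp only [clm_apply]
    simp [Matrix.mulVec, dotProduct, EuclideanSpace.single_apply, mul_ite,
      Finset.sum_ite_eq]
  rw [key, _root_.map_mul, star_clm]
  set B := Matrix.toEuclideanCLM (𝕜 := ℝ) M
  have h2 : ‖(star B * B) (EuclideanSpace.single j 1)‖ = ‖star B (B (EuclideanSpace.single j 1))‖ := rfl
  rw [h2]
  have h3 : ‖star B (B (EuclideanSpace.single j 1))‖ ≤ ‖B‖ * ‖B (EuclideanSpace.single j 1)‖ := by
    calc ‖star B (B (EuclideanSpace.single j 1))‖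
        ≤ ‖star B‖ * ‖B (EuclideanSpace.single j 1)‖ := (star B).le_opNorm _
    _ = ‖B‖ * ‖B (EuclideanSpace.single j 1)‖ := by
          rw [star_eq_adjoint, LinearIsometryEquiv.norm_map adjoint B]
  have h4 : ‖B (EuclideanSpace.single j 1)‖^2 = (Mᵀ*M) j j := col_eq M j
  have h5 := norm_nonneg (star B (B (EuclideanSpace.single j 1)))
  have h6 := norm_nonneg (B (EuclideanSpace.single j 1))
  have h7 := norm_nonneg B
  have h8 : ‖star B * B‖ = ‖B‖ * ‖B‖ := by
    rw [star_eq_adjoint, mul_def, norm_adjoint_comp_self]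
  rw [h8]
  nlinarith

end NormLemmas

theorem variance_norm_squared_bound
    {Ω : Type*} [MeasurableSpace Ω] (μ : Measure Ω) [IsProbabilityMeasure μ]
    (n : ℕ) (ε : Fin n → Ω → ℝ)
    (hmeas : ∀ i, Measurable (ε i))
    (hindep : iIndepFun ε μ)
    (hident : ∀ i j, IdentDistrib (ε i) (ε j) μ μ)
    (σ κ : ℝ) (hσ : 0 < σ)
    (hmean : ∀ i, ∫ ω, ε i ω ∂μ = 0)
    (hvar : ∀ i, ∫ ω, (ε i ω) ^ 2 ∂μ = σ ^ 2)
    (hfour_int : ∀ i, Integrable (fun ω => (ε i ω) ^ 4) μ)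
    (hfour : ∀ i, ∫ ω, (ε i ω) ^ 4 ∂μ = (3 + κ) * σ ^ 4)
    (M : Matrix (Fin n) (Fin n) ℝ) :
    (∫ ω, M.mulVec (fun i => ε i ω) ⬝ᵥ M.mulVec (fun i => ε i ω) ∂μ) =
        σ ^ 2 * (Mᵀ * M).trace ∧
      variance (fun ω => M.mulVec (fun i => ε i ω) ⬝ᵥ M.mulVec (fun i => ε i ω)) μ ≤
        (2 + |κ|) * σ ^ 2 * ‖Matrix.toEuclideanCLM (𝕜 := ℝ) (Mᵀ * M)‖ *
          ∫ ω, M.mulVec (fun i => ε i ω) ⬝ᵥ M.mulVec (fun i => ε i ω) ∂μ := by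
  classical
  have hindep2 : ∀ {a b : Fin n}, a ≠ b → (∫ ω, ε a ω * ε b ω ∂μ) = 0 :=
    fun hab => m11 hmeas hindep hmean hfour_int hab
  set A := Mᵀ * M with hA
  -- the quadratic form as a function
  set Qf : Ω → ℝ := fun ω => ∑ p : Fin n × Fin n, A p.1 p.2 * (ε p.1 ω * ε p.2 ω) with hQf
  have hfun : (fun ω => M.mulVec (fun i => ε i ω) ⬝ᵥ M.mulVec (fun i => ε i ω)) = Qf :=
    funext fun ω => quad_eq M _
  -- expectation of each pair
  have hint_pair : ∀ p : Fin n × Fin n,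
      ∫ ω, ε p.1 ω * ε p.2 ω ∂μ = if p.1 = p.2 then σ^2 else 0 := by
    intro p
    by_cases h : p.1 = p.2
    · rw [if_pos h, ← h]
      rw [show (fun ω => ε p.1 ω * ε p.1 ω) = fun ω => (ε p.1 ω)^2 from
        funext fun ω => by ring]
      exact hvar p.1
    · rw [if_neg h]; exact hindep2 h
  -- first part
  have part1 : ∫ ω, Qf ω ∂μ = σ^2 * A.trace := by
    rw [hQf]
    rw [integral_finset_sum _ (fun p _ => ((int_pair hmeas hfour_int p.1 p.2).const_mul _))]
    have : ∀ p : Fin n × Fin n, (∫ ω, A p.1 p.2 * (ε p.1 ω * ε p.2 ω) ∂μ)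
        = A p.1 p.2 * (if p.1 = p.2 then σ^2 else 0) := fun p => by
      rw [integral_const_mul, hint_pair p]
    rw [Finset.sum_congr rfl fun p _ => this p]
    simp [Fintype.sum_prod_type, mul_ite, Matrix.trace, Matrix.diag, Finset.sum_ite_eq,
      Finset.mul_sum]
    exact Finset.sum_congr rfl fun i _ => by ring
  -- squared expansion
  have hsq : ∀ ω, (Qf ω)^2 = ∑ p : Fin n × Fin n, ∑ q : Fin n × Fin n,
      (A p.1 p.2 * A q.1 q.2) * (ε p.1 ω * ε p.2 ω * ε q.1 ω * ε q.2 ω) := by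
    intro ω
    rw [sq, hQf, Finset.sum_mul_sum]
    exact Finset.sum_congr rfl fun p _ => Finset.sum_congr rfl fun q _ => by ring
  have hint_each : ∀ (p q : Fin n × Fin n),
      Integrable (fun ω => (A p.1 p.2 * A q.1 q.2) *
        (ε p.1 ω * ε p.2 ω * ε q.1 ω * ε q.2 ω)) μ :=
    fun p q => (int_quad hmeas hfour_int p.1 p.2 q.1 q.2).const_mul _
  have hQmeas : AEStronglyMeasurable Qf μ := by
    refine Measurable.aestronglyMeasurable ?_
    exact Finset.measurable_sum _ fun p _ => ((hmeas p.1).mul (hmeas p.2)).const_mul _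
  have hQsq_int : Integrable (fun ω => (Qf ω)^2) μ := by
    rw [show (fun ω => (Qf ω)^2) = fun ω => ∑ p : Fin n × Fin n, ∑ q : Fin n × Fin n,
        (A p.1 p.2 * A q.1 q.2) * (ε p.1 ω * ε p.2 ω * ε q.1 ω * ε q.2 ω) from
      funext hsq]
    exact integrable_finset_sum _ fun p _ => integrable_finset_sum _ fun q _ => hint_each p q
  have hMem : MemLp Qf 2 μ := (memLp_two_iff_integrable_sq hQmeas).2 hQsq_int
  -- second moment
  have part2 : ∫ ω, (Qf ω)^2 ∂μ
      = σ^2*σ^2 * (A.trace * A.trace)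
        + σ^2*σ^2 * (∑ p : Fin n × Fin n, A p.1 p.2 * A p.1 p.2)
        + σ^2*σ^2 * (∑ p : Fin n × Fin n, A p.1 p.2 * A p.2 p.1)
        + κ*σ^2*σ^2 * (∑ i, A i i * A i i) := by
    rw [show (fun ω => (Qf ω)^2) = fun ω => ∑ p : Fin n × Fin n, ∑ q : Fin n × Fin n,
        (A p.1 p.2 * A q.1 q.2) * (ε p.1 ω * ε p.2 ω * ε q.1 ω * ε q.2 ω) from
      funext hsq]
    rw [integral_finset_sum _ (fun p _ =>
      integrable_finset_sum _ fun q _ => hint_each p q)]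
    have hstep : ∀ p : Fin n × Fin n,
        (∫ ω, ∑ q : Fin n × Fin n, (A p.1 p.2 * A q.1 q.2) *
          (ε p.1 ω * ε p.2 ω * ε q.1 ω * ε q.2 ω) ∂μ)
        = ∑ q : Fin n × Fin n,
            (σ^2*σ^2 * (A p.1 p.2 * A q.1 q.2 *
              ((if p.1 = p.2 then (1:ℝ) else 0) * (if q.1 = q.2 then 1 else 0)))
            + σ^2*σ^2 * (A p.1 p.2 * A q.1 q.2 *
              ((if p.1 = q.1 then (1:ℝ) else 0) * (if p.2 = q.2 then 1 else 0)))
            + σ^2*σ^2 * (A p.1 p.2 * A q.1 q.2 *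
              ((if p.1 = q.2 then (1:ℝ) else 0) * (if p.2 = q.1 then 1 else 0)))
            + κ*σ^2*σ^2 * (A p.1 p.2 * A q.1 q.2 *
              ((if p.1 = p.2 then (1:ℝ) else 0) * (if p.2 = q.1 then 1 else 0)
                * (if q.1 = q.2 then 1 else 0)))) := by
      intro p
      rw [integral_finset_sum _ (fun q _ => hint_each p q)]
      refine Finset.sum_congr rfl fun q _ => ?_
      rw [integral_const_mul,
        m_formula hmeas hindep hmean hvar hfour_int hfour hindep2 p.1 p.2 q.1 q.2]
      ring
    rw [Finset.sum_congr rfl fun p _ => hstep p]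
    simp only [Finset.sum_add_distrib, ← Finset.mul_sum]
    rw [sumS1' A, sumS2 A, sumS3 A, sumS4 A]
  -- symmetry of A
  have hAsym : ∀ a b : Fin n, A b a = A a b := by
    intro a b
    simp only [hA, Matrix.mul_apply, Matrix.transpose_apply]
    exact Finset.sum_congr rfl fun k _ => by ring
  have hsym_sum : (∑ p : Fin n × Fin n, A p.1 p.2 * A p.2 p.1)
      = ∑ p : Fin n × Fin n, A p.1 p.2 * A p.1 p.2 :=
    Finset.sum_congr rfl fun p _ => by rw [hAsym p.2 p.1]
  -- variance
  have hvarQ : variance Qf μ = κ*(σ^2*σ^2) * (∑ i, A i i * A i i)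
      + 2*(σ^2*σ^2) * (∑ p : Fin n × Fin n, A p.1 p.2 * A p.1 p.2) := by
    rw [variance_eq_sub hMem]
    have h1 : μ[Qf^2] = ∫ ω, (Qf ω)^2 ∂μ := rfl
    have h2 : μ[Qf] = ∫ ω, Qf ω ∂μ := rfl
    rw [h1, h2, part2, part1, hsym_sum]
    ring
  -- bounds
  set N := ‖Matrix.toEuclideanCLM (𝕜 := ℝ) A‖ with hN
  have hN0 : 0 ≤ N := norm_nonneg _
  have htr0 : 0 ≤ A.trace := by
    rw [Matrix.trace]
    exact Finset.sum_nonneg fun i _ => diag_nonneg M i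
  have hD2 : (∑ i, A i i * A i i) ≤ N * A.trace := by
    calc (∑ i, A i i * A i i) ≤ ∑ i, N * A i i := by
          refine Finset.sum_le_sum fun i _ => ?_
          have h1 := diag_le_norm M i
          have h2 := diag_nonneg M i
          nlinarith
    _ = N * A.trace := by rw [Matrix.trace, Finset.mul_sum]; rfl
  have hF : (∑ p : Fin n × Fin n, A p.1 p.2 * A p.1 p.2) ≤ N * A.trace := by
    have h0 : (∑ p : Fin n × Fin n, A p.1 p.2 * A p.1 p.2)
        = ∑ j, ∑ i, (A i j)^2 := by
      rw [Fintype.sum_prod_type, Finset.sum_comm]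
      exact Finset.sum_congr rfl fun j _ => Finset.sum_congr rfl fun i _ => by ring
    rw [h0, Matrix.trace, Finset.mul_sum]
    exact Finset.sum_le_sum fun j _ => colsq_le M j
  have hD20 : 0 ≤ (∑ i, A i i * A i i) :=
    Finset.sum_nonneg fun i _ => mul_self_nonneg _
  have hF0 : 0 ≤ (∑ p : Fin n × Fin n, A p.1 p.2 * A p.1 p.2) :=
    Finset.sum_nonneg fun p _ => mul_self_nonneg _
  have hκ : κ ≤ |κ| := le_abs_self κ
  have hκ0 : 0 ≤ |κ| := abs_nonneg κ
  have hσ2 : 0 < σ^2 := by positivity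
  have hIeq : (∫ ω, M.mulVec (fun i => ε i ω) ⬝ᵥ M.mulVec (fun i => ε i ω) ∂μ)
      = σ^2 * A.trace := by rw [hfun]; exact part1
  constructor
  · exact hIeq
  · rw [hIeq, hfun, hvarQ]
    have key1 : κ*(σ^2*σ^2) * (∑ i, A i i * A i i) ≤ |κ| * (σ^2*σ^2)*(N*A.trace) := by
      nlinarith [mul_nonneg (mul_nonneg (sub_nonneg.2 hκ) (le_of_lt (mul_pos hσ2 hσ2))) hD20,
        mul_nonneg (mul_nonneg hκ0 (le_of_lt (mul_pos hσ2 hσ2))) (sub_nonneg.2 hD2)]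
    have key2 : 2*(σ^2*σ^2) * (∑ p : Fin n × Fin n, A p.1 p.2 * A p.1 p.2)
        ≤ 2*(σ^2*σ^2)*(N*A.trace) := by
      nlinarith [mul_nonneg (le_of_lt (mul_pos hσ2 hσ2)) (sub_nonneg.2 hF)]
    nlinarith [key1, key2]
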